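/- arXiv:1602.04241 — 4 statements merged into one kernel-verified Lean document; each statement's English description precedes it below -/
import Mathlib

section
/- Let Γ be a discrete abelian group and E₁, E₂ ⊆ Γ subsets such that the closures of ι(E₁) and ι(E₂) in 𝕋^{Hom(Γ,𝕋)} (with ι the evaluation embedding) have a common point. Then there is no function φ : Γ → ℂ which is a uniform limit on Γ of finite ℂ-linear combinations of homomorphisms Γ → 𝕋 and which satisfies φ ≡ 1 on E₁ and φ ≡ 0 on E₂. -/
theorem stmt3 {Γ : Type*} [AddCommGroup Γ] (E₁ E₂ : Set Γ)
    (h : ∃ p : AddChar Γ Circle → Circle,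
      p ∈ closure ((fun γ (c : AddChar Γ Circle) => c γ) '' E₁) ∧
      p ∈ closure ((fun γ (c : AddChar Γ Circle) => c γ) '' E₂)) :
    ¬ ∃ φ : Γ → ℂ,
      (∀ ε > (0 : ℝ), ∃ (n : ℕ) (a : Fin n → ℂ) (c : Fin n → AddChar Γ Circle),
        ∀ γ, ‖φ γ - ∑ i, a i * (c i γ : ℂ)‖ ≤ ε) ∧
      (∀ γ ∈ E₁, φ γ = 1) ∧ (∀ γ ∈ E₂, φ γ = 0) := by
  rintro ⟨φ, happrox, h1, h0⟩
  obtain ⟨p, hp1, hp2⟩ := h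
  obtain ⟨n, a, c, hP⟩ := happrox (1/4) (by norm_num)
  set F : (AddChar Γ Circle → Circle) → ℂ := fun q => ∑ i, a i * (q (c i) : ℂ) with hF
  have hcont : Continuous F := by
    apply continuous_finset_sum
    intro i _
    exact continuous_const.mul (continuous_subtype_val.comp (continuous_apply (c i)))
  have key : ∀ (E : Set Γ) (z : ℂ), (∀ γ ∈ E, φ γ = z) →
      ∀ q ∈ closure ((fun γ (c : AddChar Γ Circle) => c γ) '' E),
      ‖F q - z‖ ≤ 1/4 := by
    intro E z hz q hq
    have hcl : IsClosed {q | ‖F q - z‖ ≤ 1/4} := by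
      apply isClosed_le _ continuous_const
      exact continuous_norm.comp ((hcont.sub continuous_const))
    have hsub : (fun γ (c : AddChar Γ Circle) => c γ) '' E ⊆
        {q | ‖F q - z‖ ≤ 1/4} := by
      rintro _ ⟨γ, hγ, rfl⟩
      have : F (fun c : AddChar Γ Circle => c γ) - z = -(φ γ - ∑ i, a i * (c i γ : ℂ)) := by
        rw [hz γ hγ, hF]; ring_nf
      simp only [Set.mem_setOf_eq, this, norm_neg]
      exact hP γ
    exact closure_minimal hsub hcl hq
  have hA := key E₁ 1 h1 p hp1
  have hB := key E₂ 0 h0 p hp2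
  rw [sub_zero] at hB
  have : (1 : ℝ) = ‖(F p - 0) - (F p - 1)‖ := by norm_num
  have htri := norm_sub_le_norm_sub_add_norm_sub (F p - 0) (F p - 1) 0
  rw [sub_zero] at htri
  have h1' : ‖(F p) - (F p - 1)‖ ≤ 1/2 := by
    calc ‖(F p) - (F p - 1)‖ ≤ ‖F p‖ + ‖F p - 1‖ := by
          simpa using norm_sub_le_norm_sub_add_norm_sub (F p) 0 (F p - 1) |>.trans (by simp [norm_sub_rev])
      _ ≤ 1/2 := by linarith
  simp at h1'
  linarith
end

section
/- Let q > 2 be real and let E = {n_j}_{j≥1} ⊆ ℕ be a Hadamard sequence with ratio at least q, i.e., n_{j+1}/n_j ≥ q for all j. Then for every φ : E → 𝕋 there exists x ∈ ℝ such that |φ(n_j) − e^{2πi n_j x}| ≤ |e^{iπ/(q−1)} − 1| for all j; i.e., E is a weak ε-Kronecker subset of ℤ with ε = |e^{iπ/(q−1)} − 1|. -/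
lemma absexp (θ : ℝ) : ‖Complex.exp (θ * Complex.I) - 1‖ = 2 * |Real.sin (θ / 2)| := by
  rw [Complex.exp_mul_I, Complex.norm_def]
  have h2 : Real.sin (θ/2) ^ 2 = 1/2 - Real.cos θ / 2 := by
    have h := Real.cos_sq (θ/2)
    rw [show 2*(θ/2)=θ by ring] at h
    have := Real.sin_sq_add_cos_sq (θ/2)
    nlinarith
  have h1 : Complex.normSq (Complex.cos θ + Complex.sin θ * Complex.I - 1)
      = (2 * Real.sin (θ/2)) ^ 2 := by
    simp [Complex.normSq_apply, Complex.cos_ofReal_re, Complex.sin_ofReal_re,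
      Complex.cos_ofReal_im, Complex.sin_ofReal_im]
    nlinarith [Real.sin_sq_add_cos_sq θ]
  rw [h1, Real.sqrt_sq_eq_abs, abs_mul]
  norm_num

lemma sinmono {u v : ℝ} (h1 : |u| ≤ v) (h2 : v ≤ Real.pi/2) : |Real.sin u| ≤ Real.sin v := by
  have h0 : (0:ℝ) ≤ v := le_trans (abs_nonneg u) h1
  have hpi : (0:ℝ) < Real.pi := Real.pi_pos
  have h4 : Real.pi ≤ 4 := Real.pi_le_four
  have key : |Real.sin u| = Real.sin |u| := by
    rcases abs_cases u with ⟨h, hu⟩ | ⟨h, hu⟩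
    · rw [h, _root_.abs_of_nonneg]
      exact Real.sin_nonneg_of_nonneg_of_le_pi hu (by nlinarith [h1.trans h2])
    · have hs : Real.sin u ≤ 0 := by
        have : Real.sin (-u) ≥ 0 := Real.sin_nonneg_of_nonneg_of_le_pi (by linarith)
          (by nlinarith [h1.trans h2, abs_nonneg u, h])
        rw [Real.sin_neg] at this; linarith
      rw [h, Real.sin_neg, _root_.abs_of_nonpos hs]
  rw [key]
  exact Real.sin_le_sin_of_le_of_le_pi_div_two (by linarith [abs_nonneg u]) h2 h1

lemma ceilmem (A c N : ℝ) (hN : 0 < N) :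
    A ≤ (c + ⌈A * N - c⌉) / N ∧ (c + ⌈A * N - c⌉) / N ≤ A + 1 / N := by
  have hinv : (1/N) * N = 1 := by field_simp
  constructor
  · rw [le_div_iff₀ hN]
    have := Int.le_ceil (A * N - c)
    push_cast at this
    linarith
  · rw [div_le_iff₀ hN]
    have : (⌈A * N - c⌉ : ℝ) < A * N - c + 1 := Int.ceil_lt_add_one (A * N - c)
    nlinarith

noncomputable def cseq (θ N : ℕ → ℝ) (δ : ℝ) : ℕ → ℝ
  | 0 => θ 0 / N 0
  | j+1 => (θ (j+1) +
      ⌈(cseq θ N δ j - (δ / N j - δ / N (j+1))) * N (j+1) - θ (j+1)⌉) / N (j+1)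

lemma cseq_mod (θ N : ℕ → ℝ) (δ : ℝ) (hN : ∀ j, 0 < N j) (j : ℕ) :
    ∃ k : ℤ, cseq θ N δ j * N j = θ j + k := by
  cases j with
  | zero =>
    exact ⟨0, by rw [cseq, div_mul_cancel₀ _ (hN 0).ne']; push_cast; ring⟩
  | succ i =>
    exact ⟨_, by rw [cseq, div_mul_cancel₀ _ (hN (i+1)).ne']⟩

lemma absdiff (α β : ℝ) :
    ‖Complex.exp ((α:ℂ) * Complex.I) - Complex.exp ((β:ℂ) * Complex.I)‖
    = ‖Complex.exp (((α - β : ℝ):ℂ) * Complex.I) - 1‖ := by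
  have h : Complex.exp ((α:ℂ) * Complex.I) - Complex.exp ((β:ℂ) * Complex.I)
      = Complex.exp ((β:ℂ) * Complex.I) * (Complex.exp (((α - β : ℝ):ℂ) * Complex.I) - 1) := by
    rw [mul_sub, mul_one, ← Complex.exp_add]
    congr 1
    push_cast
    ring_nf
  rw [h, norm_mul, Complex.norm_exp_ofReal_mul_I, one_mul]

theorem stmt9 (q : ℝ) (hq : 2 < q) (n : ℕ → ℕ)
    (hpos : ∀ j, 0 < n j) (hratio : ∀ j, q ≤ (n (j + 1) : ℝ) / (n j : ℝ))
    (φ : ℕ → ℂ) (hφ : ∀ j, ‖φ j‖ = 1) :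
    ∃ x : ℝ, ∀ j,
      ‖φ j - Complex.exp (2 * Real.pi * Complex.I * (n j : ℂ) * (x : ℂ))‖ ≤
        ‖Complex.exp (Real.pi * Complex.I / ((q : ℂ) - 1)) - 1‖ := by
  have hq1 : (1:ℝ) < q - 1 := by linarith
  have hpi := Real.pi_pos
  set δ : ℝ := 1/(2*(q-1)) with hδdef
  have hδpos : 0 < δ := by rw [hδdef]; positivity
  have hδ2 : 2*δ*(q-1) = 1 := by rw [hδdef]; field_simp
  have hδhalf : δ ≤ 1/2 := by nlinarith
  set N : ℕ → ℝ := fun j => (n j : ℝ) with hNdef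
  have hN : ∀ j, 0 < N j := fun j => by
    simp only [hNdef]; exact_mod_cast hpos j
  have hNr : ∀ j, q * N j ≤ N (j+1) := fun j => by
    have h := hratio j
    rw [le_div_iff₀ (hN j)] at h
    exact h
  set θf : ℕ → ℝ := fun j => Complex.arg (φ j) / (2*Real.pi) with hθdef
  have hθ : ∀ j, Complex.exp (((2*Real.pi*θf j : ℝ) : ℂ) * Complex.I) = φ j := by
    intro j
    have h := Complex.norm_mul_exp_arg_mul_I (φ j)
    rw [hφ j, Complex.ofReal_one, one_mul] at h
    rw [← h]
    congr 2
    simp only [hθdef]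
    field_simp
  set c : ℕ → ℝ := cseq θf N δ with hcdef
  have hstep : ∀ j, |c (j+1) - c j| ≤ δ/N j - δ/N (j+1) := by
    intro j
    have hgap : 1/N (j+1) ≤ δ/N j - δ/N (j+1) + (δ/N j - δ/N (j+1)) := by
      have h1 : (1+2*δ) * N j ≤ 2*δ * N (j+1) := by nlinarith [hNr j, (hN j).le]
      have h2 : (1+2*δ)/N (j+1) ≤ 2*δ/N j := by
        rw [div_le_div_iff₀ (hN (j+1)) (hN j)]
        nlinarith [hNr j, (hN j).le]
      have h3 : (1+2*δ)/N (j+1) = 1/N (j+1) + 2*δ/N (j+1) := by ring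
      have h4 : 2*δ/N j = δ/N j + δ/N j := by ring
      have h5 : 2*δ/N (j+1) = δ/N (j+1) + δ/N (j+1) := by ring
      linarith
    obtain ⟨hA, hB⟩ := ceilmem (c j - (δ/N j - δ/N (j+1))) (θf (j+1)) (N (j+1)) (hN (j+1))
    have hc1 : c (j+1)
        = (θf (j+1) + ⌈(c j - (δ / N j - δ / N (j+1))) * N (j+1) - θf (j+1)⌉) / N (j+1) := by
      rw [hcdef]; rw [cseq]
    rw [← hc1] at hA hB
    rw [abs_le]
    constructor <;> linarith
  have hcau : ∀ j m, j ≤ m → |c m - c j| ≤ δ/N j - δ/N m := by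
    intro j m hjm
    induction m, hjm using Nat.le_induction with
    | base => simp
    | succ m hjm ih =>
      have h1 := hstep m
      have : |c (m+1) - c j| ≤ |c (m+1) - c m| + |c m - c j| := by
        have := abs_sub_abs_le_abs_sub (c (m+1)) (c j)
        exact abs_sub_le (c (m+1)) (c m) (c j)
      linarith
  have hpow : ∀ j, (2:ℝ)^j ≤ N j := by
    intro j
    induction j with
    | zero =>
      simp only [pow_zero, hNdef]
      exact_mod_cast hpos 0
    | succ j ih =>
      have := hNr j
      have h2 : (2:ℝ)^(j+1) = 2 * 2^j := by ring
      nlinarith [hN j, pow_pos (by norm_num : (0:ℝ) < 2) j]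
  have hcauchy : CauchySeq c := by
    apply cauchySeq_of_le_geometric (1/2) δ (by norm_num)
    intro j
    rw [Real.dist_eq]
    have h1 := hstep j
    have h2 : |c j - c (j+1)| = |c (j+1) - c j| := abs_sub_comm _ _
    have h3 : δ / N j ≤ δ / 2^j := by
      apply div_le_div_of_nonneg_left hδpos.le (pow_pos (by norm_num) j) (hpow j)
    have h4 : δ / 2^j = δ * (1/2)^j := by
      rw [one_div, inv_pow, div_eq_mul_inv]
    have h5 : 0 < δ / N (j+1) := div_pos hδpos (hN (j+1))
    linarith
  obtain ⟨x, hx⟩ := cauchySeq_tendsto_of_complete hcauchy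
  have hclose : ∀ j, |x - c j| ≤ δ / N j := by
    intro j
    have htend : Filter.Tendsto (fun m => |c m - c j|) Filter.atTop (nhds (|x - c j|)) :=
      (hx.sub_const (c j)).abs
    refine le_of_tendsto htend ?_
    filter_upwards [Filter.eventually_ge_atTop j] with m hm
    have := hcau j m hm
    have h5 : 0 < δ / N m := div_pos hδpos (hN m)
    linarith
  refine ⟨x, fun j => ?_⟩
  obtain ⟨k, hk⟩ := cseq_mod θf N δ hN j
  rw [← hcdef] at hk
  set t : ℝ := θf j + k - N j * x with htdef
  have ht : |t| ≤ δ := by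
    have he : t = N j * (c j - x) := by rw [htdef, ← hk]; ring
    rw [he, abs_mul, abs_of_pos (hN j), abs_sub_comm]
    calc N j * |x - c j| ≤ N j * (δ / N j) := by
          exact mul_le_mul_of_nonneg_left (hclose j) (hN j).le
      _ = δ := by rw [mul_comm, div_mul_cancel₀ _ (hN j).ne']
  -- rewrite RHS
  have hrhs : Real.pi * Complex.I / ((q:ℂ) - 1) = ((Real.pi/(q-1) : ℝ) : ℂ) * Complex.I := by
    push_cast; ring
  rw [hrhs, absexp]
  -- rewrite LHS
  have hφj : Complex.exp (((2*Real.pi*(θf j + k) : ℝ) : ℂ) * Complex.I) = φ j := by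
    rw [← hθ j]
    have h : ((2*Real.pi*(θf j + k) : ℝ) : ℂ) * Complex.I
        = ((2*Real.pi*θf j : ℝ) : ℂ) * Complex.I + (k:ℂ) * (2*(Real.pi:ℂ)*Complex.I) := by
      push_cast; ring
    rw [h, Complex.exp_add, Complex.exp_int_mul_two_pi_mul_I, mul_one]
  have hβ : Complex.exp (2 * Real.pi * Complex.I * (n j : ℂ) * (x:ℂ))
      = Complex.exp (((2*Real.pi*(N j * x) : ℝ) : ℂ) * Complex.I) := by
    congr 1
    simp only [hNdef]
    push_cast; ring
  rw [← hφj, hβ, absdiff]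
  have harg : (2*Real.pi*(θf j + k) - 2*Real.pi*(N j * x)) = 2*Real.pi*t := by
    rw [htdef]; ring
  rw [harg, absexp]
  rw [show 2*Real.pi*t/2 = Real.pi*t by ring,
    show Real.pi/(q-1)/2 = Real.pi*δ by rw [hδdef, div_div, mul_one_div, mul_comm (q-1) 2]]
  have hle : |Real.sin (Real.pi*t)| ≤ Real.sin (Real.pi*δ) := by
    apply sinmono
    · rw [abs_mul, abs_of_pos hpi]
      exact mul_le_mul_of_nonneg_left ht hpi.le
    · nlinarith
  have : Real.sin (Real.pi*δ) ≤ |Real.sin (Real.pi*δ)| := le_abs_self _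
  linarith
end

section
/- Let q > 2 be an integer and let (λ_n)_{n≥1} and (χ_n)_{n≥1} be sequences of rational numbers. For x ∈ ℚ in reduced form s/t (gcd(s,t)=1, t>0) write D(x) = t. Define B₀ = D(χ₁) and B_n = 2·max{D(λ_i), D(χ_j) : 1 ≤ i ≤ n, 1 ≤ j ≤ n+1} for n ≥ 1, and assume D(λ_{n+1}) > q·B_n! for all n ≥ 0. Then for every sequence (t_n) in 𝕋 there exists a group homomorphism g : (ℚ,+) → 𝕋 with g(ℤ) = {1} such that |g(λ_n + χ_n) − t_n| < |e^{iπ/q} − 1| for all n ≥ 1. In particular {λ_n + χ_n} is an ε-Kronecker subset of ℚ for ε = |e^{iπ/q} − 1| ≥ π-over-q chord length. -/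
open Complex Real

lemma aux_int_mul (x : ℚ) (d : ℤ) (h : (x.den : ℤ) ∣ d) : ∃ s : ℤ, x * d = (s : ℚ) := by
  obtain ⟨e, rfl⟩ := h
  refine ⟨x.num * e, ?_⟩
  push_cast
  rw [← mul_assoc, Rat.mul_den_eq_num]

lemma aux_den_dvd (x : ℚ) (m : ℕ) (hm : 0 < m) (s : ℤ) (h : x * m = s) : x.den ∣ m := by
  have hx : x = Rat.divInt s m := by
    rw [Rat.divInt_eq_div, eq_div_iff (by exact_mod_cast hm.ne')]
    exact_mod_cast h
  have := Rat.den_dvd s (m : ℤ)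
  rw [← hx] at this
  exact_mod_cast this

lemma chord (θ : ℝ) : ‖Complex.exp (θ * Complex.I) - 1‖ = 2 * |Real.sin (θ/2)| := by
  have h1 : ‖Complex.exp (θ * Complex.I) - 1‖
      = Real.sqrt ((Real.cos θ - 1)^2 + (Real.sin θ)^2) := by
    rw [Complex.norm_def, Complex.normSq_apply]
    simp [Complex.sub_re, Complex.sub_im, Complex.exp_ofReal_mul_I_re, Complex.exp_ofReal_mul_I_im]
    ring_nf
  have h2 : (Real.cos θ - 1)^2 + (Real.sin θ)^2 = (2 * |Real.sin (θ/2)|)^2 := by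
    have hc : Real.cos θ = 1 - 2 * Real.sin (θ/2)^2 := by
      have := Real.cos_two_mul' (θ/2)
      have h3 := Real.sin_sq_add_cos_sq (θ/2)
      have h4 : 2 * (θ/2) = θ := by ring
      rw [h4] at this
      nlinarith
    have h5 := Real.sin_sq_add_cos_sq θ
    have h6 : |Real.sin (θ/2)|^2 = Real.sin (θ/2)^2 := sq_abs _
    nlinarith
  rw [h1, h2, Real.sqrt_sq (by positivity)]

lemma key (q : ℕ) (hq : 2 < q) (r : ℚ) (hr : q < r.den) (w t : ℂ)
    (hw : ‖w‖ = 1) (ht : ‖t‖ = 1) :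
    ∃ k : ℤ, ‖w * Complex.exp (2*π*((k * r : ℚ):ℝ) * Complex.I) - t‖
      < 2 * Real.sin (π/(2*q)) := by
  have hπ := Real.pi_pos
  set z : ℕ := r.den with hz
  have hzpos : (0:ℝ) < z := by positivity
  have hqpos : (0:ℝ) < q := by positivity
  have hqz : (q:ℝ) < z := by exact_mod_cast hr
  have hw0 : w ≠ 0 := by intro h; simp [h] at hw
  set θ := (t / w).arg with hθ
  have habs : ‖t / w‖ = 1 := by rw [norm_div, hw, ht]; norm_num
  have hu0 : t = w * Complex.exp (θ * Complex.I) := by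
    have := Complex.norm_mul_exp_arg_mul_I (t / w)
    rw [habs] at this
    field_simp at this
    rw [← this, hθ, div_eq_mul_inv]; push_cast; ring
  set j : ℤ := round (θ * z / (2*π)) with hj
  have hδ : |θ - 2*π*j/z| ≤ π/z := by
    have h1 := abs_sub_round (θ * z / (2*π))
    have h2 : θ - 2*π*j/z = (2*π/z) * (θ * z / (2*π) - j) := by field_simp
    rw [h2, abs_mul, abs_of_pos (by positivity : (0:ℝ) < 2*π/z)]
    calc 2*π/z * |θ * z / (2*π) - j| ≤ 2*π/z * (1/2) := by
          exact mul_le_mul_of_nonneg_left h1 (by positivity)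
      _ = π/z := by ring
  have hco : IsCoprime (r.num) (z:ℤ) := by
    rw [Int.isCoprime_iff_gcd_eq_one]
    exact r.reduced
  obtain ⟨c, d, hcd⟩ := hco
  refine ⟨j * c, ?_⟩
  have hzQ : (z:ℚ) ≠ 0 := by positivity
  have hkr : ((j*c : ℤ) * r : ℚ) = (j : ℚ)/z - (j*d:ℤ) := by
    have hcdQ : (c:ℚ)*r.num + d*z = 1 := by exact_mod_cast hcd
    nth_rewrite 1 [← Rat.num_div_den r]
    push_cast
    field_simp
    linear_combination (j:ℚ)*(z:ℚ)*hcdQ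
  set δ : ℝ := 2*π*(j:ℝ)/z - θ with hδ'
  have hexp : Complex.exp (2*π*(((j*c:ℤ) * r : ℚ):ℝ) * Complex.I)
      = Complex.exp (θ * Complex.I) * Complex.exp ((δ:ℝ) * Complex.I) := by
    rw [← Complex.exp_add]
    have hkrR : (((j*c:ℤ) * r : ℚ) : ℝ) = (j:ℝ)/z - ((j*d : ℤ):ℝ) := by exact_mod_cast hkr
    have heq : (2*π*(((j*c:ℤ) * r : ℚ):ℝ) : ℂ) * Complex.I
        = (↑θ * Complex.I + (δ:ℝ) * Complex.I) + (-(j*d) : ℤ) * (2*(π:ℂ)*Complex.I) := by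
      rw [hkrR, hδ']
      push_cast
      have hzC : (z:ℂ) ≠ 0 := by exact_mod_cast hzpos.ne'
      field_simp
      ring
    rw [heq, Complex.exp_add, Complex.exp_int_mul_two_pi_mul_I, mul_one]
  have habs2 : ‖w * Complex.exp (2*π*(((j*c:ℤ) * r : ℚ):ℝ) * Complex.I) - t‖
      = 2 * |Real.sin (δ/2)| := by
    rw [hexp, hu0]
    have : w * (Complex.exp (↑θ * Complex.I) * Complex.exp ((δ:ℝ) * Complex.I))
        - w * Complex.exp (↑θ * Complex.I)
        = (w * Complex.exp (↑θ * Complex.I)) * (Complex.exp ((δ:ℝ) * Complex.I) - 1) := by ring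
    rw [this, norm_mul, norm_mul, hw, Complex.norm_exp_ofReal_mul_I, chord]
    ring
  rw [habs2]
  have hq1R : (1:ℝ) ≤ q := by exact_mod_cast (by omega : 1 ≤ q)
  have hz1R : (1:ℝ) ≤ z := by exact_mod_cast Nat.one_le_iff_ne_zero.mpr (by positivity : (0:ℕ) < z).ne'
  have hpos_z : 0 < π/(2*(z:ℝ)) := by positivity
  have hpos_q : 0 < π/(2*(q:ℝ)) := by positivity
  have hδle : |δ/2| ≤ π/(2*z) := by
    have h1 : |δ| ≤ π/z := by
      rw [hδ']
      rw [abs_sub_comm] at hδ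
      exact hδ
    have h2 : |δ/2| = |δ|/2 := by
      rw [_root_.abs_div, _root_.abs_two]
    rw [h2]
    rw [show π/(2*(z:ℝ)) = (π/z)/2 by ring]
    linarith
  have hz2 : π/(2*z) ≤ π/2 := by
    apply div_le_div_of_nonneg_left hπ.le (by norm_num)
    linarith
  have hsinabs : |Real.sin (δ/2)| = Real.sin |δ/2| := by
    rcases le_or_gt 0 (δ/2) with h | h
    · rw [_root_.abs_of_nonneg h, _root_.abs_of_nonneg]
      apply Real.sin_nonneg_of_nonneg_of_le_pi h
      have := hδle
      rw [_root_.abs_of_nonneg h] at this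
      linarith
    · rw [_root_.abs_of_neg h, Real.sin_neg]
      apply _root_.abs_of_nonpos
      apply Real.sin_nonpos_of_nonpos_of_neg_pi_le (le_of_lt h)
      have := hδle
      rw [_root_.abs_of_neg h] at this
      linarith
  have hmono := Real.strictMonoOn_sin
  have hm1 : Real.sin |δ/2| ≤ Real.sin (π/(2*z)) := by
    rcases eq_or_lt_of_le hδle with h | h
    · rw [h]
    · exact le_of_lt (hmono ⟨by linarith [abs_nonneg (δ/2)], by linarith [abs_nonneg (δ/2)]⟩
        ⟨by linarith, hz2⟩ h)
  
  have hq2 : π/(2*q) ≤ π/2 := by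
    apply div_le_div_of_nonneg_left hπ.le (by norm_num)
    linarith
  have hm2 : Real.sin (π/(2*z)) < Real.sin (π/(2*q)) := by
    apply hmono ⟨by linarith, hz2⟩ ⟨by linarith [div_pos hπ (by linarith : (0:ℝ) < 2*q)], hq2⟩
    apply div_lt_div_of_pos_left hπ (by linarith)
    linarith
  rw [hsinabs]
  linarith
theorem stmt10 (q : ℕ) (hq : 2 < q) (lam chi : ℕ → ℚ) (B : ℕ → ℕ)
    (hB0 : B 0 = (chi 1).den)
    (hBn : ∀ n ≥ 1, B n = 2 * (((Finset.Icc 1 n).sup fun i => (lam i).den) ⊔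
      ((Finset.Icc 1 (n + 1)).sup fun j => (chi j).den)))
    (hden : ∀ n : ℕ, q * (B n).factorial < (lam (n + 1)).den) :
    ∀ t : ℕ → ℂ, (∀ n, ‖t n‖ = 1) →
      ∃ g : AddChar ℚ Circle, (∀ k : ℤ, g (k : ℚ) = 1) ∧
        ∀ n ≥ 1, ‖(g (lam n + chi n) : ℂ) - t n‖ <
          ‖Complex.exp (Real.pi * Complex.I / q) - 1‖ := by
  intro t ht
  -- basic facts about B
  have hlamB : ∀ n, 1 ≤ n → (lam n).den ≤ B n := by
    intro n hn
    rw [hBn n hn]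
    have h1 : (lam n).den ≤ (Finset.Icc 1 n).sup fun i => (lam i).den := by
      exact Finset.le_sup (f := fun i => (lam i).den) (by simp only [Finset.mem_Icc]; omega)
    calc (lam n).den ≤ _ := h1
      _ ≤ _ ⊔ _ := le_sup_left
      _ ≤ 2 * _ := Nat.le_mul_of_pos_left _ (by norm_num)
  have hchiB : ∀ n, (chi (n+1)).den ≤ B n := by
    intro n
    rcases Nat.eq_zero_or_pos n with rfl | hn
    · rw [hB0]
    · rw [hBn n hn]
      have h1 : (chi (n+1)).den ≤ (Finset.Icc 1 (n+1)).sup fun j => (chi j).den := by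
        exact Finset.le_sup (f := fun j => (chi j).den) (by simp only [Finset.mem_Icc]; omega)
      calc (chi (n+1)).den ≤ _ := h1
        _ ≤ _ ⊔ _ := le_sup_right
        _ ≤ 2 * _ := Nat.le_mul_of_pos_left _ (by norm_num)
  have hchiB' : ∀ n, 1 ≤ n → (chi n).den ≤ B n := by
    intro n hn
    rw [hBn n hn]
    have h1 : (chi n).den ≤ (Finset.Icc 1 (n+1)).sup fun j => (chi j).den := by
      exact Finset.le_sup (f := fun j => (chi j).den) (by simp only [Finset.mem_Icc]; omega)
    calc (chi n).den ≤ _ := h1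
      _ ≤ _ ⊔ _ := le_sup_right
      _ ≤ 2 * _ := Nat.le_mul_of_pos_left _ (by norm_num)
  have hmono : Monotone B := by
    apply monotone_nat_of_le_succ
    intro n
    rcases Nat.eq_zero_or_pos n with rfl | hn
    · rw [hB0]; exact hchiB' 1 le_rfl
    · rw [hBn n hn, hBn (n+1) (by omega)]
      apply Nat.mul_le_mul_left
      apply sup_le_sup
      · exact Finset.sup_mono (Finset.Icc_subset_Icc le_rfl (by omega))
      · exact Finset.sup_mono (Finset.Icc_subset_Icc le_rfl (by omega))
  have hlt : ∀ n, n < B n := by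
    intro n
    induction n with
    | zero => rw [hB0]; exact (chi 1).den_pos
    | succ n ih =>
      have h1 : q * (B n).factorial < (lam (n+1)).den := hden n
      have h2 := hlamB (n+1) (by omega)
      have h3 := Nat.self_le_factorial (B n)
      nlinarith
  set L : ℕ → ℕ := fun n => (B n).factorial with hL
  have hLpos : ∀ n, 0 < L n := fun n => Nat.factorial_pos _
  have hLdvd : ∀ m n, m ≤ n → L m ∣ L n :=
    fun m n h => Nat.factorial_dvd_factorial (hmono h)
  have hdvdL : ∀ d n, 0 < d → d ≤ B n → d ∣ L n := fun d n h1 h2 => Nat.dvd_factorial h1 h2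
  have hxden : ∀ (x : ℚ) (n : ℕ), x.den ≤ n → x.den ∣ L n :=
    fun x n h => hdvdL _ _ x.den_pos (h.trans (hlt n).le)
  -- ε computation
  have hq0 : (0:ℝ) < q := by positivity
  have hEps : ‖Complex.exp (Real.pi * Complex.I / q) - 1‖
      = 2 * Real.sin (Real.pi/(2*q)) := by
    have h1 : (Real.pi : ℂ) * Complex.I / q = ((Real.pi/q : ℝ) : ℂ) * Complex.I := by
      push_cast; ring
    rw [h1, chord]
    have h2 : (Real.pi/(q:ℝ))/2 = Real.pi/(2*q) := by ring
    rw [h2, _root_.abs_of_nonneg]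
    apply Real.sin_nonneg_of_nonneg_of_le_pi (by positivity)
    rw [div_le_iff₀ (by positivity)]
    have hq1R : (1:ℝ) ≤ q := by exact_mod_cast (by omega : 1 ≤ q)
    nlinarith [Real.pi_pos, hq1R]
  -- periodicity helper
  have hper : ∀ (y : ℚ) (m : ℤ), Circle.exp (2*Real.pi*((y + (m:ℚ) : ℚ):ℝ))
      = Circle.exp (2*Real.pi*((y:ℚ):ℝ)) := by
    intro y m
    rw [show 2*Real.pi*((y + (m:ℚ) : ℚ):ℝ) = (m:ℝ)*(2*Real.pi) + 2*Real.pi*((y:ℚ):ℝ) by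
      push_cast; ring, Circle.exp_add, Circle.exp_int_mul_two_pi, one_mul]
  -- the step existence
  have hstep : ∀ (n : ℕ) (v : ℤ), ∃ k : ℤ,
      ‖(Circle.exp (2*Real.pi*((((lam (n+1)+chi (n+1)) * ((v + (L n : ℤ) * k : ℤ) : ℚ)) : ℚ):ℝ)) : ℂ)
        - t (n+1)‖ < 2 * Real.sin (Real.pi/(2*q)) := by
    intro n v
    set r : ℚ := lam (n+1) * (L n : ℚ) with hr
    obtain ⟨s, hs⟩ := aux_int_mul (chi (n+1)) (L n : ℤ)
      (by exact_mod_cast Int.natCast_dvd_natCast.mpr (hdvdL _ _ (chi (n+1)).den_pos (hchiB n)))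
    have hrden : q < r.den := by
      have h1 : (lam (n+1)).den ∣ r.den * L n := by
        apply aux_den_dvd _ _ (Nat.mul_pos r.den_pos (hLpos n)) (r.num)
        push_cast
        rw [show (lam (n+1)) * ((r.den : ℚ) * (L n : ℚ)) = (lam (n+1) * (L n : ℚ)) * r.den by ring]
        rw [← hr, Rat.mul_den_eq_num]
      have h2 : (lam (n+1)).den ≤ r.den * L n :=
        Nat.le_of_dvd (Nat.mul_pos r.den_pos (hLpos n)) h1
      have h3 := hden n
      have : q * L n < r.den * L n := lt_of_lt_of_le h3 h2
      exact Nat.lt_of_mul_lt_mul_right this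
    obtain ⟨k, hk⟩ := key q hq r hrden
      ((Circle.exp (2*Real.pi*(((lam (n+1)+chi (n+1)) * (v:ℚ) : ℚ):ℝ))) : ℂ) (t (n+1))
      (Circle.norm_coe _) (ht (n+1))
    refine ⟨k, ?_⟩
    have heq : ((Circle.exp (2*Real.pi*((((lam (n+1)+chi (n+1)) * ((v + (L n : ℤ) * k : ℤ) : ℚ)) : ℚ):ℝ)) : ℂ))
        = (Circle.exp (2*Real.pi*(((lam (n+1)+chi (n+1)) * (v:ℚ) : ℚ):ℝ)) : ℂ)
          * Complex.exp (2*Real.pi*((k * r : ℚ):ℝ) * Complex.I) := by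
      have hsplit : ((lam (n+1)+chi (n+1)) * ((v + (L n : ℤ) * k : ℤ) : ℚ) : ℚ)
          = ((lam (n+1)+chi (n+1)) * (v:ℚ) + (k * r : ℚ)) + ((k * s : ℤ):ℚ) := by
        push_cast
        rw [hr]
        linear_combination (k:ℚ) * hs
      rw [hsplit, hper]
      rw [show 2*Real.pi*((((lam (n+1)+chi (n+1)) * (v:ℚ) + (k * r : ℚ)) : ℚ):ℝ)
          = 2*Real.pi*(((lam (n+1)+chi (n+1)) * (v:ℚ) : ℚ):ℝ) + 2*Real.pi*((k * r : ℚ):ℝ) by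
        push_cast; ring]
      rw [Circle.exp_add]
      push_cast [Circle.coe_exp]
      ring_nf
    rw [heq]
    exact hk
  choose F hF using hstep
  let a : ℕ → ℤ := fun n => Nat.rec (motive := fun _ => ℤ) 0 (fun m v => v + (L m : ℤ) * F m v) n
  have haS : ∀ n, a (n+1) = a n + (L n : ℤ) * F n (a n) := fun n => rfl
  have hcompat : ∀ m n, m ≤ n → (L m : ℤ) ∣ (a n - a m) := by
    intro m n h
    induction n, h using Nat.le_induction with
    | base => simp
    | succ n hmn ih =>
      rw [haS n, show a n + (L n : ℤ) * F n (a n) - a m = (a n - a m) + (L n : ℤ) * F n (a n) by ring]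
      exact dvd_add ih (Dvd.dvd.mul_right (by exact_mod_cast hLdvd m n hmn) _)
  -- the character
  set f : ℚ → Circle := fun x => Circle.exp (2*Real.pi*((x * (↑(a x.den) : ℚ) : ℚ):ℝ)) with hf
  have hcore : ∀ (x : ℚ) (p n : ℕ), x.den ∣ L p → p ≤ n →
      Circle.exp (2*Real.pi*((x * (↑(a p) : ℚ) : ℚ):ℝ)) = Circle.exp (2*Real.pi*((x * (↑(a n) : ℚ) : ℚ):ℝ)) := by
    intro x p n hdvd hpn
    obtain ⟨c, hc⟩ := hcompat p n hpn
    obtain ⟨s, hs⟩ := aux_int_mul x ((L p : ℤ) * c)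
      (Dvd.dvd.mul_right (by exact_mod_cast Int.natCast_dvd_natCast.mpr hdvd) _)
    have h1 : (x * (↑(a n) : ℚ) : ℚ) = (x * (↑(a p) : ℚ) : ℚ) + (s : ℚ) := by
      have hc' : (↑(a n) : ℚ) = (↑(a p) : ℚ) + (((L p : ℤ) * c : ℤ) : ℚ) := by
        exact_mod_cast congrArg (fun z => ((z:ℤ):ℚ)) (by linarith [hc] : a n = a p + (L p : ℤ) * c)
      rw [hc']
      linear_combination hs
    rw [h1, hper]
  have hwd : ∀ (x : ℚ) (n : ℕ), x.den ∣ L n →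
      f x = Circle.exp (2*Real.pi*((x * (↑(a n) : ℚ) : ℚ):ℝ)) := by
    intro x n hdvd
    rcases le_total x.den n with h | h
    · exact hcore x x.den n (hxden x x.den le_rfl) h
    · exact (hcore x n x.den hdvd h).symm
  have hadd : ∀ x y : ℚ, f (x + y) = f x * f y := by
    intro x y
    set n := max (max x.den y.den) (x+y).den with hn
    have hx : x.den ∣ L n := hxden x n (by omega)
    have hy : y.den ∣ L n := hxden y n (by omega)
    have hxy : (x+y).den ∣ L n := hxden (x+y) n (by omega)
    rw [hwd (x+y) n hxy, hwd x n hx, hwd y n hy, ← Circle.exp_add]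
    congr 1
    push_cast
    ring
  have h0 : f 0 = 1 := by
    rw [hf]
    simp only [zero_mul]
    norm_num [Circle.exp_zero]
  refine ⟨AddChar.mk f h0 hadd, ?_, ?_⟩
  · intro k
    show f (k:ℚ) = 1
    have hd : ((k:ℚ)).den = 1 := Rat.den_intCast k
    have h1 : ((k:ℚ) * (↑(a ((k:ℚ)).den) : ℚ) : ℚ) = ((0:ℚ) + ((k * a 1 : ℤ):ℚ)) := by
      rw [hd]; push_cast; ring
    rw [hf]
    simp only []
    rw [h1, hper]
    norm_num [Circle.exp_zero]
  · intro n hn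
    obtain ⟨m, rfl⟩ : ∃ m, n = m + 1 := ⟨n-1, by omega⟩
    have hdsum : (lam (m+1) + chi (m+1)).den ∣ L (m+1) := by
      have hd1 : ((lam (m+1)).den : ℤ) ∣ (L (m+1) : ℤ) := by
        exact_mod_cast Int.natCast_dvd_natCast.mpr (hdvdL _ _ (lam (m+1)).den_pos (hlamB (m+1) (by omega)))
      have hd2 : ((chi (m+1)).den : ℤ) ∣ (L (m+1) : ℤ) := by
        exact_mod_cast Int.natCast_dvd_natCast.mpr (hdvdL _ _ (chi (m+1)).den_pos (hchiB' (m+1) (by omega)))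
      obtain ⟨s1, hs1⟩ := aux_int_mul (lam (m+1)) (L (m+1) : ℤ) hd1
      obtain ⟨s2, hs2⟩ := aux_int_mul (chi (m+1)) (L (m+1) : ℤ) hd2
      apply aux_den_dvd _ _ (hLpos (m+1)) (s1 + s2)
      push_cast
      push_cast at hs1 hs2
      linarith [hs1, hs2]
    have hgval : ((AddChar.mk f h0 hadd) (lam (m+1) + chi (m+1)) : ℂ)
        = (Circle.exp (2*Real.pi*(((lam (m+1)+chi (m+1)) * (↑(a (m+1)) : ℚ) : ℚ):ℝ)) : ℂ) := by
      congr 1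
      exact hwd _ (m+1) hdsum
    rw [hgval, hEps]
    have := hF m (a m)
    rw [← haS m] at this
    exact this
end

section
/- Let Λ = ⨁_{n≥1} Λ_n be a direct sum of abelian groups with projections p_n, and let (e_n)_{n≥1} ⊆ Λ be a sequence such that for each n: p_n(e_n) has finite order M_n ≥ q (for a fixed integer q ≥ 2), p_n(e_n) generates a cyclic subgroup on which some character achieves any M_n-th root of unity (which holds automatically since Λ_n can be paired with its character group, 𝕋 being divisible), and p_k(e_n) = 0 for all k > n. Then (e_n) is weak ε_q-Kronecker in Λ with ε_q = |e^{iπ/q} − 1|: for every sequence (t_n) in 𝕋 there is a homomorphism g : Λ → 𝕋 with |g(e_n) − t_n| ≤ ε_q for all n. -/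
open DirectSum

noncomputable instance : DivisibleBy (Additive Circle) ℤ :=
  Function.Surjective.divisibleBy Circle.expHom
    (fun z => ⟨Complex.arg (z.toMul : ℂ), congrArg Additive.ofMul (Circle.exp_arg z.toMul)⟩)
    (fun a n => map_zsmul Circle.expHom n a)

/-- Any group element of order `M` can be sent to any `M`-th root of unity by a character. -/
lemma exists_addChar_apply_eq {A : Type*} [AddCommGroup A] (x : A) (ζ : Circle)
    (hζ : ζ ^ addOrderOf x = 1) : ∃ f : AddChar A Circle, f x = ζ := by
  classical
  set Mx : ℤ := (addOrderOf x : ℤ) with hMx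
  have hker1 : ∀ s ∈ AddSubgroup.zmultiples Mx, (zmultiplesHom A x) s = 0 := by
    intro s hs
    obtain ⟨k, hk⟩ := AddSubgroup.mem_zmultiples_iff.mp hs
    have : s • x = 0 := by
      rw [← hk, smul_assoc]
      have : Mx • x = 0 := by
        rw [hMx, natCast_zsmul]
        exact addOrderOf_nsmul_eq_zero x
      rw [this, smul_zero]
    simpa using this
  have hker2 : ∀ s ∈ AddSubgroup.zmultiples Mx,
      (zmultiplesHom (Additive Circle) (Additive.ofMul ζ)) s = 0 := by
    intro s hs
    obtain ⟨k, hk⟩ := AddSubgroup.mem_zmultiples_iff.mp hs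
    have hd : Mx ∣ s := by exact ⟨k, by rw [← hk]; rw [smul_eq_mul]; ring⟩
    have hz : ζ ^ s = 1 := by
      obtain ⟨k', rfl⟩ := hd
      rw [zpow_mul, hMx, zpow_natCast, hζ, one_zpow]
    have : s • (Additive.ofMul ζ) = Additive.ofMul (ζ ^ s) := rfl
    simp only [zmultiplesHom_apply, this, hz]
    rfl
  set fq : ℤ ⧸ AddSubgroup.zmultiples Mx →+ A :=
    QuotientAddGroup.lift _ (zmultiplesHom A x) hker1 with hfq
  set gq : ℤ ⧸ AddSubgroup.zmultiples Mx →+ Additive Circle :=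
    QuotientAddGroup.lift _ (zmultiplesHom (Additive Circle) (Additive.ofMul ζ)) hker2 with hgq
  have hinj : Function.Injective fq := by
    rw [injective_iff_map_eq_zero]
    intro a
    induction a using QuotientAddGroup.induction_on with
    | H n =>
      intro hn
      have hnx : n • x = 0 := by change (zmultiplesHom A x) n = 0 at hn; simpa using hn
      have hdvd : Mx ∣ n := addOrderOf_dvd_iff_zsmul_eq_zero.mpr hnx
      obtain ⟨k, rfl⟩ := hdvd
      exact (QuotientAddGroup.eq_zero_iff _).mpr
        (AddSubgroup.mem_zmultiples_iff.mpr ⟨k, by rw [smul_eq_mul]; ring⟩)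
  obtain ⟨h, hh⟩ := Module.Baer.extension_property_addMonoidHom
    (Module.Baer.of_divisible (Additive Circle)) fq hinj gq
  refine ⟨AddChar.toAddMonoidHomEquiv.symm h, ?_⟩
  have h1 : fq ((1 : ℤ) : ℤ ⧸ AddSubgroup.zmultiples Mx) = x := by change (zmultiplesHom A x) 1 = x; simp
  have h2 : gq ((1 : ℤ) : ℤ ⧸ AddSubgroup.zmultiples Mx) = Additive.ofMul ζ := by change (zmultiplesHom (Additive Circle) (Additive.ofMul ζ)) 1 = Additive.ofMul ζ; simp
  have := DFunLike.congr_fun hh ((1 : ℤ) : ℤ ⧸ AddSubgroup.zmultiples Mx)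
  simp only [AddMonoidHom.comp_apply, h1, h2] at this
  simp [this]

lemma chord_eq (r : ℝ) :
    ‖Complex.exp (r * Complex.I) - 1‖ = Real.sqrt (2 - 2 * Real.cos r) := by
  rw [Complex.norm_def]
  congr 1
  rw [Complex.normSq_apply]
  simp only [Complex.sub_re, Complex.sub_im, Complex.one_re, Complex.one_im,
    Complex.exp_ofReal_mul_I_re, Complex.exp_ofReal_mul_I_im]
  nlinarith [Real.sin_sq_add_cos_sq r]

lemma chord_mono {s r : ℝ} (hs : 0 ≤ s) (hsr : s ≤ r) (hr : r ≤ Real.pi) :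
    ‖Complex.exp (s * Complex.I) - 1‖ ≤
      ‖Complex.exp (r * Complex.I) - 1‖ := by
  rw [chord_eq, chord_eq]
  apply Real.sqrt_le_sqrt
  have := Real.cos_le_cos_of_nonneg_of_le_pi hs hr hsr
  linarith

/-- Any point of the circle is within `|exp(iπ/M) - 1|` of an `M`-th root of unity. -/
lemma exists_root_near (Mn : ℕ) (hMn : 0 < Mn) (z : Circle) :
    ∃ ζ : Circle, ζ ^ Mn = 1 ∧ ‖(ζ : ℂ) - (z : ℂ)‖ ≤
      ‖Complex.exp (((Real.pi / Mn : ℝ) : ℂ) * Complex.I) - 1‖ := by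
  have hMn' : (Mn : ℝ) ≠ 0 := Nat.cast_ne_zero.mpr hMn.ne'
  set θ : ℝ := Complex.arg (z : ℂ) with hθ
  have hz : Circle.exp θ = z := Circle.exp_arg z
  set y : ℝ := θ * Mn / (2 * Real.pi) with hy
  set k : ℤ := round y with hk
  set s : ℝ := 2 * Real.pi * k / Mn with hs
  refine ⟨Circle.exp s, ?_, ?_⟩
  · ext
    rw [show ((Circle.exp s ^ Mn : Circle) : ℂ) = (Circle.exp s : ℂ) ^ Mn from rfl,
      Circle.coe_exp, ← Complex.exp_nat_mul]
    have hMnC : (Mn : ℂ) ≠ 0 := Nat.cast_ne_zero.mpr hMn.ne'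
    have h1 : (Mn : ℂ) * ((s : ℝ) * Complex.I) = (k : ℂ) * (2 * (Real.pi : ℂ) * Complex.I) := by
      rw [hs]
      push_cast
      field_simp
    rw [h1]
    have h2 := Complex.exp_int_mul_two_pi_mul_I k
    rw [h2]
    norm_num
  · have hdist : |s - θ| ≤ Real.pi / Mn := by
      have hrd : |y - (k : ℝ)| ≤ 1 / 2 := by
        simpa [hk] using abs_sub_round y
      have hval : s - θ = (2 * Real.pi / Mn) * ((k : ℝ) - y) := by
        rw [hs, hy]
        field_simp
      rw [hval, abs_mul, abs_sub_comm (k : ℝ) y]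
      have h2 : |2 * Real.pi / Mn| = 2 * Real.pi / Mn := by
        rw [abs_of_nonneg]
        positivity
      rw [h2]
      calc 2 * Real.pi / Mn * |y - (k : ℝ)| ≤ 2 * Real.pi / Mn * (1 / 2) := by
            apply mul_le_mul_of_nonneg_left hrd
            positivity
        _ = Real.pi / Mn := by ring
    have hcoe : ((Circle.exp s : Circle) : ℂ) - (z : ℂ) =
        Complex.exp ((θ : ℝ) * Complex.I) * (Complex.exp (((s - θ : ℝ) : ℂ) * Complex.I) - 1) := by
      rw [← hz]
      simp only [Circle.coe_exp]
      rw [mul_sub, mul_one, ← Complex.exp_add]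
      congr 2
      push_cast
      ring
    rw [hcoe, norm_mul, Complex.norm_exp_ofReal_mul_I, one_mul, chord_eq, chord_eq]
    apply Real.sqrt_le_sqrt
    have hpiM : Real.pi / Mn ≤ Real.pi := by
      apply div_le_self Real.pi_pos.le
      exact_mod_cast hMn
    have hcos : Real.cos (Real.pi / Mn) ≤ Real.cos |s - θ| :=
      Real.cos_le_cos_of_nonneg_of_le_pi (abs_nonneg _) hpiM hdist
    rw [Real.cos_abs] at hcos
    linarith

/-- Combined: a character sending `x` (of order `Mn`) close to any target `w`. -/
lemma exists_addChar_near {A : Type*} [AddCommGroup A] (x : A) (Mn : ℕ) (hMn : 0 < Mn)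
    (hord : addOrderOf x = Mn) (w : Circle) :
    ∃ f : AddChar A Circle, ‖(f x : ℂ) - (w : ℂ)‖ ≤
      ‖Complex.exp (((Real.pi / Mn : ℝ) : ℂ) * Complex.I) - 1‖ := by
  obtain ⟨ζ, hζ1, hζ2⟩ := exists_root_near Mn hMn w
  obtain ⟨f, hf⟩ := exists_addChar_apply_eq x ζ (by rw [hord]; exact hζ1)
  exact ⟨f, by rw [hf]; exact hζ2⟩

lemma toAddMonoid_eval {Λ : ℕ → Type*} [∀ n, AddCommGroup (Λ n)]
    (F : ∀ k, Λ k →+ Additive Circle) (x : ⨁ n, Λ n) (n : ℕ)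
    (hx : ∀ k, n < k → x k = 0) :
    DirectSum.toAddMonoid F x = ∑ k ∈ Finset.range (n + 1), F k (x k) := by
  classical
  have h1 : DirectSum.toAddMonoid F x = DFinsupp.sumAddHom F x := rfl
  rw [h1, DFinsupp.sumAddHom_apply, DFinsupp.sum]
  apply Finset.sum_subset
  · intro k hk
    rw [DFinsupp.mem_support_iff] at hk
    rw [Finset.mem_range]
    by_contra h
    exact hk (hx k (by omega))
  · intro k _ hk
    rw [DFinsupp.notMem_support_iff.mp hk, map_zero]

set_option maxHeartbeats 1000000 in
theorem stmt12 {Λ : ℕ → Type*} [∀ n, AddCommGroup (Λ n)]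
    (q : ℕ) (hq : 2 ≤ q) (e : ℕ → ⨁ n, Λ n) (M : ℕ → ℕ)
    (horder : ∀ n, addOrderOf (e n n) = M n) (hM : ∀ n, q ≤ M n)
    (htri : ∀ n k, n < k → e n k = 0) :
    ∀ t : ℕ → Circle, ∃ g : AddChar (⨁ n, Λ n) Circle,
      ∀ n, ‖(g (e n) : ℂ) - (t n : ℂ)‖ ≤
        ‖Complex.exp (Real.pi * Complex.I / q) - 1‖ := by
  intro t
  classical
  have hMpos : ∀ n, 0 < M n := fun n => lt_of_lt_of_le (by omega) (hM n)
  -- recursively choose the characters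
  let G : ∀ n, AddChar (Λ n) Circle := fun n => Nat.strongRecOn n (fun n ih =>
    (exists_addChar_near (e n n) (M n) (hMpos n) (horder n)
      (t n * (∏ k ∈ Finset.range n,
        (if h : k < n then ih k h else 1) (e n k))⁻¹)).choose)
  have hG : ∀ n, G n = (exists_addChar_near (e n n) (M n) (hMpos n) (horder n)
      (t n * (∏ k ∈ Finset.range n,
        (if h : k < n then G k else 1) (e n k))⁻¹)).choose :=
    fun n => Nat.strongRecOn_eq _ _
  have hGspec : ∀ n,
      ‖((G n) (e n n) : ℂ) -
        ((t n * (∏ k ∈ Finset.range n, (G k) (e n k))⁻¹ : Circle) : ℂ)‖ ≤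
      ‖Complex.exp (((Real.pi / (M n) : ℝ) : ℂ) * Complex.I) - 1‖ := by
    intro n
    have hd : (∏ k ∈ Finset.range n,
        (if h : k < n then G k else (1 : AddChar (Λ k) Circle)) (e n k)) =
        ∏ k ∈ Finset.range n, (G k) (e n k) :=
      Finset.prod_congr rfl fun k hk => by rw [dif_pos (Finset.mem_range.mp hk)]
    have h2 := hG n
    rw [hd] at h2
    rw [h2]
    exact (exists_addChar_near (e n n) (M n) (hMpos n) (horder n)
      (t n * (∏ k ∈ Finset.range n, (G k) (e n k))⁻¹)).choose_spec
  refine ⟨AddChar.toAddMonoidHomEquiv.symm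
    (DirectSum.toAddMonoid (fun k => AddChar.toAddMonoidHomEquiv (G k))), ?_⟩
  intro n
  have heval : (AddChar.toAddMonoidHomEquiv.symm
      (DirectSum.toAddMonoid (fun k => AddChar.toAddMonoidHomEquiv (G k)))) (e n) =
      ∏ k ∈ Finset.range (n + 1), (G k) (e n k) := by
    rw [AddChar.toAddMonoidHomEquiv_symm_apply,
      toAddMonoid_eval _ (e n) n (htri n), toMul_sum]
    rfl
  rw [heval, Finset.prod_range_succ]
  set c : Circle := ∏ k ∈ Finset.range n, (G k) (e n k) with hc
  have ht : (t n : ℂ) = (c : ℂ) * ((t n * c⁻¹ : Circle) : ℂ) := by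
    push_cast
    field_simp
  rw [ht]
  have hfac : ((c * (G n) (e n n) : Circle) : ℂ) - (c : ℂ) * ((t n * c⁻¹ : Circle) : ℂ) =
      (c : ℂ) * (((G n) (e n n) : ℂ) - ((t n * c⁻¹ : Circle) : ℂ)) := by
    push_cast
    ring
  rw [hfac, norm_mul, Circle.norm_coe, one_mul]
  refine le_trans (hGspec n) ?_
  have hq0 : (0 : ℝ) < q := by positivity
  have hMq : Real.pi / M n ≤ Real.pi / q := by
    apply div_le_div_of_nonneg_left Real.pi_pos.le hq0
    exact_mod_cast hM n
  have hqpi : Real.pi / q ≤ Real.pi := div_le_self Real.pi_pos.le (by exact_mod_cast Nat.one_le_of_lt hq)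
  have hrw : Real.pi * Complex.I / q = ((Real.pi / q : ℝ) : ℂ) * Complex.I := by
    push_cast
    ring
  rw [hrw]
  exact chord_mono (by positivity) hMq hqpi
end
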